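/- Let V be a representation of an A_n-type quiver such that every map f_i is either injective of corank 1 or surjective of nullity 1. Then in the interval decomposition of V: for every index i > 1 there is at most one interval summand with birth i, and for every index j < n there is at most one interval summand with death j. -/
import Mathlib


/-- A representation of an `A_{n+1}`-type quiver with vertices `0,…,n` and arrows
`i ↔ i+1` for `i : Fin n`, oriented forward when `orient i = true`. -/
structure ZigzagRep (F : Type) [Field F] (n : ℕ) (orient : Fin n → Bool) where
  V : Fin (n + 1) → Type
  addgrp : ∀ i, AddCommGroup (V i) := by infer_instance
  mod : ∀ i, Module F (V i) := by infer_instance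
  fwd : ∀ i : Fin n, orient i = true → (V i.castSucc →ₗ[F] V i.succ)
  bwd : ∀ i : Fin n, orient i = false → (V i.succ →ₗ[F] V i.castSucc)

attribute [instance] ZigzagRep.addgrp ZigzagRep.mod

variable {F : Type} [Field F] {n : ℕ} {orient : Fin n → Bool}

/-- Isomorphism of zigzag representations. -/
structure ZigzagRep.Iso (A B : ZigzagRep F n orient) where
  e : ∀ i, A.V i ≃ₗ[F] B.V i
  comm_fwd : ∀ (i : Fin n) (h : orient i = true) (x : A.V i.castSucc),
    e i.succ (A.fwd i h x) = B.fwd i h (e i.castSucc x)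
  comm_bwd : ∀ (i : Fin n) (h : orient i = false) (x : A.V i.succ),
    e i.castSucc (A.bwd i h x) = B.bwd i h (e i.succ x)

/-- The space at vertex `i` of the interval representation `I[b;d]`. -/
def intervalSp (F : Type) [Field F] (b d i : ℕ) : Submodule F F :=
  if b ≤ i ∧ i ≤ d then ⊤ else ⊥

open Classical in
/-- The interval representation `I[b;d]`. -/
noncomputable def intervalRep (F : Type) [Field F] (n : ℕ) (orient : Fin n → Bool)
    (b d : ℕ) : ZigzagRep F n orient where
  V i := ↥(intervalSp F b d i)
  fwd i _ :=
    if h : intervalSp F b d i ≤ intervalSp F b d (i + 1) then Submodule.inclusion h else 0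
  bwd i _ :=
    if h : intervalSp F b d (i + 1) ≤ intervalSp F b d i then Submodule.inclusion h else 0

/-- Direct sum of a family of zigzag representations. -/
noncomputable def ZigzagRep.dsum {ι : Type} [DecidableEq ι]
    (R : ι → ZigzagRep F n orient) : ZigzagRep F n orient where
  V i := Π₀ k, (R k).V i
  fwd i h := DFinsupp.mapRange.linearMap fun k => (R k).fwd i h
  bwd i h := DFinsupp.mapRange.linearMap fun k => (R k).bwd i h

/-- Binary direct sum of two zigzag representations. -/
def ZigzagRep.prod (A B : ZigzagRep F n orient) : ZigzagRep F n orient where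
  V i := A.V i × B.V i
  fwd i h := (A.fwd i h).prodMap (B.fwd i h)
  bwd i h := (A.bwd i h).prodMap (B.bwd i h)

section Helpers

private lemma nontriv_of_eq_top {p : Submodule F F} (h : p = ⊤) : Nontrivial p := by
  subst h
  exact ⟨⟨0, Submodule.mem_top⟩, ⟨1, Submodule.mem_top⟩, by simp [Subtype.ext_iff]⟩

private lemma subsing_of_eq_bot {p : Submodule F F} (h : p = ⊥) : Subsingleton p := by
  subst h; infer_instance

private lemma not_inj_ss {A B : Type} [AddCommGroup A] [Module F A] [AddCommGroup B]
    [Module F B] [Nontrivial A] [Subsingleton B] (f : A →ₗ[F] B) :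
    ¬ Function.Injective f := by
  intro h
  obtain ⟨x, hx⟩ := exists_ne (0 : A)
  exact hx (h (Subsingleton.elim (f x) (f 0)))

private lemma not_surj_ss {A B : Type} [AddCommGroup A] [Module F A] [AddCommGroup B]
    [Module F B] [Subsingleton A] [Nontrivial B] (f : A →ₗ[F] B) :
    ¬ Function.Surjective f := by
  intro h
  obtain ⟨y, hy⟩ := exists_ne (0 : B)
  obtain ⟨x, rfl⟩ := h y
  exact hy (by rw [Subsingleton.elim x 0, map_zero])

private lemma intervalSp_top {b d i : ℕ} (h1 : b ≤ i) (h2 : i ≤ d) :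
    intervalSp F b d i = ⊤ := by
  simp [intervalSp, h1, h2]

private lemma intervalSp_bot {b d i : ℕ} (h : ¬ (b ≤ i ∧ i ≤ d)) :
    intervalSp F b d i = ⊥ := by
  simp only [intervalSp, if_neg h]

private lemma intervalRep_fwd_not_inj {b d : ℕ} (i : Fin n) (h : orient i = true)
    (hb : b ≤ (i : ℕ)) (hd : d = (i : ℕ)) :
    ¬ Function.Injective ((intervalRep F n orient b d).fwd i h) := by
  haveI : Nontrivial ((intervalRep F n orient b d).V i.castSucc) :=
    nontriv_of_eq_top (p := intervalSp F b d ((i.castSucc : Fin (n + 1)) : ℕ))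
      (intervalSp_top (by simp [hb]) (by simp; omega))
  haveI : Subsingleton ((intervalRep F n orient b d).V i.succ) :=
    subsing_of_eq_bot (p := intervalSp F b d ((i.succ : Fin (n + 1)) : ℕ))
      (intervalSp_bot (by simp; omega))
  exact not_inj_ss _

private lemma intervalRep_fwd_not_surj {b d : ℕ} (i : Fin n) (h : orient i = true)
    (hb : b = (i : ℕ) + 1) (hd : (i : ℕ) + 1 ≤ d) :
    ¬ Function.Surjective ((intervalRep F n orient b d).fwd i h) := by
  haveI : Subsingleton ((intervalRep F n orient b d).V i.castSucc) :=
    subsing_of_eq_bot (p := intervalSp F b d ((i.castSucc : Fin (n + 1)) : ℕ))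
      (intervalSp_bot (by simp; omega))
  haveI : Nontrivial ((intervalRep F n orient b d).V i.succ) :=
    nontriv_of_eq_top (p := intervalSp F b d ((i.succ : Fin (n + 1)) : ℕ))
      (intervalSp_top (by simp; omega) (by simp; omega))
  exact not_surj_ss _

private lemma intervalRep_bwd_not_inj {b d : ℕ} (i : Fin n) (h : orient i = false)
    (hb : b = (i : ℕ) + 1) (hd : (i : ℕ) + 1 ≤ d) :
    ¬ Function.Injective ((intervalRep F n orient b d).bwd i h) := by
  haveI : Nontrivial ((intervalRep F n orient b d).V i.succ) :=
    nontriv_of_eq_top (p := intervalSp F b d ((i.succ : Fin (n + 1)) : ℕ))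
      (intervalSp_top (by simp; omega) (by simp; omega))
  haveI : Subsingleton ((intervalRep F n orient b d).V i.castSucc) :=
    subsing_of_eq_bot (p := intervalSp F b d ((i.castSucc : Fin (n + 1)) : ℕ))
      (intervalSp_bot (by simp; omega))
  exact not_inj_ss _

private lemma intervalRep_bwd_not_surj {b d : ℕ} (i : Fin n) (h : orient i = false)
    (hb : b ≤ (i : ℕ)) (hd : d = (i : ℕ)) :
    ¬ Function.Surjective ((intervalRep F n orient b d).bwd i h) := by
  haveI : Subsingleton ((intervalRep F n orient b d).V i.succ) :=
    subsing_of_eq_bot (p := intervalSp F b d ((i.succ : Fin (n + 1)) : ℕ))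
      (intervalSp_bot (by simp; omega))
  haveI : Nontrivial ((intervalRep F n orient b d).V i.castSucc) :=
    nontriv_of_eq_top (p := intervalSp F b d ((i.castSucc : Fin (n + 1)) : ℕ))
      (intervalSp_top (by simp [hb]) (by simp; omega))
  exact not_surj_ss _

private lemma mapRange_inj_comp {ι : Type} [DecidableEq ι] {β₁ β₂ : ι → Type}
    [∀ k, AddCommGroup (β₁ k)] [∀ k, Module F (β₁ k)]
    [∀ k, AddCommGroup (β₂ k)] [∀ k, Module F (β₂ k)]
    (f : ∀ k, β₁ k →ₗ[F] β₂ k)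
    (h : Function.Injective ⇑(DFinsupp.mapRange.linearMap f)) (k : ι) :
    Function.Injective (f k) := by
  intro x y hxy
  have h1 : DFinsupp.mapRange.linearMap f (DFinsupp.single k x)
      = DFinsupp.mapRange.linearMap f (DFinsupp.single k y) := by
    simp only [DFinsupp.mapRange.linearMap_apply, DFinsupp.mapRange_single, hxy]
  have h3 := congrArg (fun z : Π₀ k, β₁ k => z k) (h h1)
  simpa using h3

private lemma mapRange_surj_comp {ι : Type} [DecidableEq ι] {β₁ β₂ : ι → Type}
    [∀ k, AddCommGroup (β₁ k)] [∀ k, Module F (β₁ k)]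
    [∀ k, AddCommGroup (β₂ k)] [∀ k, Module F (β₂ k)]
    (f : ∀ k, β₁ k →ₗ[F] β₂ k)
    (h : Function.Surjective ⇑(DFinsupp.mapRange.linearMap f)) (k : ι) :
    Function.Surjective (f k) := by
  intro y
  obtain ⟨x, hx⟩ := h (DFinsupp.single k y)
  refine ⟨x k, ?_⟩
  have h2 := congrArg (fun z : Π₀ k, β₂ k => z k) hx
  simpa [DFinsupp.mapRange.linearMap_apply, DFinsupp.mapRange_apply] using h2

/-- `Π₀` and `Π` agree over a fintype, as a linear equiv. -/
private noncomputable def dfinsuppPiEquiv {ι : Type} [Fintype ι] {β : ι → Type}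
    [∀ k, AddCommGroup (β k)] [∀ k, Module F (β k)] :
    (Π₀ k, β k) ≃ₗ[F] ∀ k, β k :=
  { DFinsupp.equivFunOnFintype with
    map_add' := fun x y => DFinsupp.coe_add x y
    map_smul' := fun c x => DFinsupp.coe_smul c x }

private lemma finrank_dsum_apply {N : ℕ} (b d : Fin N → ℕ) (j : Fin (n + 1)) :
    Module.finrank F ((ZigzagRep.dsum fun k : Fin N => intervalRep F n orient (b k) (d k)).V j)
      = (Finset.univ.filter fun k : Fin N => b k ≤ (j : ℕ) ∧ (j : ℕ) ≤ d k).card := by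
  classical
  have e : ((ZigzagRep.dsum fun k : Fin N => intervalRep F n orient (b k) (d k)).V j)
      ≃ₗ[F] ∀ k : Fin N, ↥(intervalSp F (b k) (d k) (j : ℕ)) := dfinsuppPiEquiv
  rw [e.finrank_eq, Module.finrank_pi_fintype, Finset.card_filter]
  refine Finset.sum_congr rfl fun k _ => ?_
  by_cases hk : b k ≤ (j : ℕ) ∧ (j : ℕ) ≤ d k
  · rw [if_pos hk, intervalSp_top hk.1 hk.2]
    simpa using finrank_top F F
  · rw [if_neg hk, intervalSp_bot hk]
    exact finrank_bot F F

end Helpers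

/-- **Multiplicity-one property of zigzag persistence.** If every map of the
representation `M` is either injective of corank 1 or surjective of nullity 1, then in any
interval decomposition of `M` there is at most one interval born at each index `i > 0`
(the first index) and at most one interval dying at each index `j < n` (the last index).
(Vertices are indexed `0,…,n`.) -/
theorem interval_decomposition_multiplicity_one (F : Type) [Field F] (n : ℕ)
    (orient : Fin n → Bool) (M : ZigzagRep F n orient)
    (hfd : ∀ i, FiniteDimensional F (M.V i))
    (hfwd : ∀ (i : Fin n) (h : orient i = true),
      (Function.Injective (M.fwd i h) ∧
        Module.finrank F (M.V i.succ) = Module.finrank F (M.V i.castSucc) + 1) ∨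
      (Function.Surjective (M.fwd i h) ∧
        Module.finrank F (LinearMap.ker (M.fwd i h)) = 1))
    (hbwd : ∀ (i : Fin n) (h : orient i = false),
      (Function.Injective (M.bwd i h) ∧
        Module.finrank F (M.V i.castSucc) = Module.finrank F (M.V i.succ) + 1) ∨
      (Function.Surjective (M.bwd i h) ∧
        Module.finrank F (LinearMap.ker (M.bwd i h)) = 1))
    (N : ℕ) (b d : Fin N → ℕ) (hbd : ∀ k, b k ≤ d k ∧ d k ≤ n)
    (iso : ZigzagRep.Iso M
      (ZigzagRep.dsum fun k : Fin N => intervalRep F n orient (b k) (d k))) :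
    (∀ i : ℕ, 0 < i → ∀ k k' : Fin N, b k = i → b k' = i → k = k') ∧
    (∀ j : ℕ, j < n → ∀ k k' : Fin N, d k = j → d k' = j → k = k') := by
  classical
    classical
    have hA : ∀ j : Fin (n + 1), Module.finrank F (M.V j)
        = (Finset.univ.filter fun k : Fin N => b k ≤ (j : ℕ) ∧ (j : ℕ) ≤ d k).card := fun j =>
      (iso.e j).finrank_eq.trans (finrank_dsum_apply b d j)
    have key : ∀ i : Fin n,
        (Finset.univ.filter fun k : Fin N => b k = (i : ℕ) + 1 ∧ (i : ℕ) + 1 ≤ d k).card ≤ 1 ∧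
        (Finset.univ.filter fun k : Fin N => b k ≤ (i : ℕ) ∧ d k = (i : ℕ)).card ≤ 1 := by
      intro i
      -- counting identities
      have e1 := hA i.castSucc
      have e2 := hA i.succ
      simp only [Fin.coe_castSucc, Fin.val_succ] at e1 e2
      have hsplit1 : (Finset.univ.filter fun k : Fin N => b k ≤ (i : ℕ) ∧ (i : ℕ) ≤ d k)
          = (Finset.univ.filter fun k : Fin N => b k ≤ (i : ℕ) ∧ d k = (i : ℕ)) ∪
            (Finset.univ.filter fun k : Fin N => b k ≤ (i : ℕ) ∧ (i : ℕ) + 1 ≤ d k) := by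
        ext k
        simp only [Finset.mem_filter, Finset.mem_union, Finset.mem_univ, true_and]
        omega
      have hdisj1 : Disjoint
          (Finset.univ.filter fun k : Fin N => b k ≤ (i : ℕ) ∧ d k = (i : ℕ))
          (Finset.univ.filter fun k : Fin N => b k ≤ (i : ℕ) ∧ (i : ℕ) + 1 ≤ d k) := by
        simp only [Finset.disjoint_left, Finset.mem_filter, Finset.mem_univ, true_and]
        omega
      have hsplit2 : (Finset.univ.filter fun k : Fin N => b k ≤ (i : ℕ) + 1 ∧ (i : ℕ) + 1 ≤ d k)
          = (Finset.univ.filter fun k : Fin N => b k = (i : ℕ) + 1 ∧ (i : ℕ) + 1 ≤ d k) ∪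
            (Finset.univ.filter fun k : Fin N => b k ≤ (i : ℕ) ∧ (i : ℕ) + 1 ≤ d k) := by
        ext k
        simp only [Finset.mem_filter, Finset.mem_union, Finset.mem_univ, true_and]
        omega
      have hdisj2 : Disjoint
          (Finset.univ.filter fun k : Fin N => b k = (i : ℕ) + 1 ∧ (i : ℕ) + 1 ≤ d k)
          (Finset.univ.filter fun k : Fin N => b k ≤ (i : ℕ) ∧ (i : ℕ) + 1 ≤ d k) := by
        simp only [Finset.disjoint_left, Finset.mem_filter, Finset.mem_univ, true_and]
        omega
      have c1 : (Finset.univ.filter fun k : Fin N => b k ≤ (i : ℕ) ∧ (i : ℕ) ≤ d k).card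
          = (Finset.univ.filter fun k : Fin N => b k ≤ (i : ℕ) ∧ d k = (i : ℕ)).card
            + (Finset.univ.filter fun k : Fin N => b k ≤ (i : ℕ) ∧ (i : ℕ) + 1 ≤ d k).card := by
        rw [hsplit1, Finset.card_union_of_disjoint hdisj1]
      have c2 : (Finset.univ.filter fun k : Fin N => b k ≤ (i : ℕ) + 1 ∧ (i : ℕ) + 1 ≤ d k).card
          = (Finset.univ.filter fun k : Fin N => b k = (i : ℕ) + 1 ∧ (i : ℕ) + 1 ≤ d k).card
            + (Finset.univ.filter fun k : Fin N => b k ≤ (i : ℕ) ∧ (i : ℕ) + 1 ≤ d k).card := by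
        rw [hsplit2, Finset.card_union_of_disjoint hdisj2]
      haveI := hfd i.castSucc
      haveI := hfd i.succ
      cases horient : orient i with
      | true =>
        have hDf : ∀ x, (ZigzagRep.dsum fun k : Fin N =>
              intervalRep F n orient (b k) (d k)).fwd i horient x
            = iso.e i.succ (M.fwd i horient ((iso.e i.castSucc).symm x)) := fun x => by
          rw [iso.comm_fwd i horient, LinearEquiv.apply_symm_apply]
        rcases hfwd i horient with ⟨hinj, hrk⟩ | ⟨hsurj, hker⟩
        · have hDinj : Function.Injective ((ZigzagRep.dsum fun k : Fin N =>
              intervalRep F n orient (b k) (d k)).fwd i horient) := by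
            intro x y hxy
            rw [hDf x, hDf y] at hxy
            exact (iso.e i.castSucc).symm.injective (hinj ((iso.e i.succ).injective hxy))
          have hcomp : ∀ k, Function.Injective
              ((intervalRep F n orient (b k) (d k)).fwd i horient) :=
            mapRange_inj_comp _ hDinj
          have hDempty : (Finset.univ.filter fun k : Fin N =>
              b k ≤ (i : ℕ) ∧ d k = (i : ℕ)) = ∅ := by
            rw [Finset.filter_eq_empty_iff]
            rintro k - ⟨h1, h2⟩
            exact intervalRep_fwd_not_inj i horient h1 h2 (hcomp k)
          have hD0 : (Finset.univ.filter fun k : Fin N =>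
              b k ≤ (i : ℕ) ∧ d k = (i : ℕ)).card = 0 := by rw [hDempty]; rfl
          omega
        · have hDsurj : Function.Surjective ((ZigzagRep.dsum fun k : Fin N =>
              intervalRep F n orient (b k) (d k)).fwd i horient) := by
            intro y
            obtain ⟨x, hx⟩ := hsurj ((iso.e i.succ).symm y)
            refine ⟨iso.e i.castSucc x, ?_⟩
            rw [hDf, LinearEquiv.symm_apply_apply, hx, LinearEquiv.apply_symm_apply]
          have hcomp : ∀ k, Function.Surjective
              ((intervalRep F n orient (b k) (d k)).fwd i horient) :=
            mapRange_surj_comp _ hDsurj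
          have hBempty : (Finset.univ.filter fun k : Fin N =>
              b k = (i : ℕ) + 1 ∧ (i : ℕ) + 1 ≤ d k) = ∅ := by
            rw [Finset.filter_eq_empty_iff]
            rintro k - ⟨h1, h2⟩
            exact intervalRep_fwd_not_surj i horient h1 h2 (hcomp k)
          have hB0 : (Finset.univ.filter fun k : Fin N =>
              b k = (i : ℕ) + 1 ∧ (i : ℕ) + 1 ≤ d k).card = 0 := by rw [hBempty]; rfl
          have hrn := LinearMap.finrank_range_add_finrank_ker (M.fwd i horient)
          have hrange : Module.finrank F (LinearMap.range (M.fwd i horient))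
              = Module.finrank F (M.V i.succ) := by
            rw [LinearMap.range_eq_top.mpr hsurj]; exact finrank_top F _
          omega
      | false =>
        have hDf : ∀ x, (ZigzagRep.dsum fun k : Fin N =>
              intervalRep F n orient (b k) (d k)).bwd i horient x
            = iso.e i.castSucc (M.bwd i horient ((iso.e i.succ).symm x)) := fun x => by
          rw [iso.comm_bwd i horient, LinearEquiv.apply_symm_apply]
        rcases hbwd i horient with ⟨hinj, hrk⟩ | ⟨hsurj, hker⟩
        · have hDinj : Function.Injective ((ZigzagRep.dsum fun k : Fin N =>
              intervalRep F n orient (b k) (d k)).bwd i horient) := by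
            intro x y hxy
            rw [hDf x, hDf y] at hxy
            exact (iso.e i.succ).symm.injective (hinj ((iso.e i.castSucc).injective hxy))
          have hcomp : ∀ k, Function.Injective
              ((intervalRep F n orient (b k) (d k)).bwd i horient) :=
            mapRange_inj_comp _ hDinj
          have hBempty : (Finset.univ.filter fun k : Fin N =>
              b k = (i : ℕ) + 1 ∧ (i : ℕ) + 1 ≤ d k) = ∅ := by
            rw [Finset.filter_eq_empty_iff]
            rintro k - ⟨h1, h2⟩
            exact intervalRep_bwd_not_inj i horient h1 h2 (hcomp k)
          have hB0 : (Finset.univ.filter fun k : Fin N =>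
              b k = (i : ℕ) + 1 ∧ (i : ℕ) + 1 ≤ d k).card = 0 := by rw [hBempty]; rfl
          omega
        · have hDsurj : Function.Surjective ((ZigzagRep.dsum fun k : Fin N =>
              intervalRep F n orient (b k) (d k)).bwd i horient) := by
            intro y
            obtain ⟨x, hx⟩ := hsurj ((iso.e i.castSucc).symm y)
            refine ⟨iso.e i.succ x, ?_⟩
            rw [hDf, LinearEquiv.symm_apply_apply, hx, LinearEquiv.apply_symm_apply]
          have hcomp : ∀ k, Function.Surjective
              ((intervalRep F n orient (b k) (d k)).bwd i horient) :=
            mapRange_surj_comp _ hDsurj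
          have hDempty : (Finset.univ.filter fun k : Fin N =>
              b k ≤ (i : ℕ) ∧ d k = (i : ℕ)) = ∅ := by
            rw [Finset.filter_eq_empty_iff]
            rintro k - ⟨h1, h2⟩
            exact intervalRep_bwd_not_surj i horient h1 h2 (hcomp k)
          have hD0 : (Finset.univ.filter fun k : Fin N =>
              b k ≤ (i : ℕ) ∧ d k = (i : ℕ)).card = 0 := by rw [hDempty]; rfl
          have hrn := LinearMap.finrank_range_add_finrank_ker (M.bwd i horient)
          have hrange : Module.finrank F (LinearMap.range (M.bwd i horient))
              = Module.finrank F (M.V i.castSucc) := by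
            rw [LinearMap.range_eq_top.mpr hsurj]; exact finrank_top F _
          omega
    constructor
    · intro i hi k k' hk hk'
      obtain ⟨m, rfl⟩ : ∃ m, i = m + 1 := ⟨i - 1, by omega⟩
      have hmn : m < n := by
        have h1 := (hbd k).1
        have h2 := (hbd k).2
        omega
      have hkey := (key ⟨m, hmn⟩).1
      have hmem : ∀ l : Fin N, b l = m + 1 → l ∈ (Finset.univ.filter fun l : Fin N =>
          b l = ((⟨m, hmn⟩ : Fin n) : ℕ) + 1 ∧ ((⟨m, hmn⟩ : Fin n) : ℕ) + 1 ≤ d l) := by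
        intro l hl
        simp only [Finset.mem_filter, Finset.mem_univ, true_and]
        have h1 := (hbd l).1
        exact ⟨hl, by omega⟩
      exact Finset.card_le_one.mp hkey k (hmem k hk) k' (hmem k' hk')
    · intro j hj k k' hk hk'
      have hkey := (key ⟨j, hj⟩).2
      have hmem : ∀ l : Fin N, d l = j → l ∈ (Finset.univ.filter fun l : Fin N =>
          b l ≤ ((⟨j, hj⟩ : Fin n) : ℕ) ∧ d l = ((⟨j, hj⟩ : Fin n) : ℕ)) := by
        intro l hl
        simp only [Finset.mem_filter, Finset.mem_univ, true_and]
        have h1 := (hbd l).1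
        exact ⟨by omega, hl⟩
      exact Finset.card_le_one.mp hkey k (hmem k hk) k' (hmem k' hk')
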